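/- Let X and Y be types, let Z = {CP, NC}, and let S = ((x_1,y_1,z_1),…,(x_m,y_m,z_m)) be a sample of size m ≥ 1 in X × Y × Z. Let O be a set of hypotheses X → Y and let C be a set of hypotheses X → Z containing the symmetric difference class O∆O = { x ↦ (NC if o(x) ≠ o'(x) else CP) : o, o' ∈ O }. If ĉ ∈ C minimizes the empirical cooperation-identification error ĉer_S over C (i.e., ĉer_S(ĉ) ≤ ĉer_S(c) for all c ∈ C), then for every o, o' ∈ O: ĉer_S(ĉ) ≤ p̂_S + ôer_S(o) − Δ_S(o'). (This is the empirical, sample-level core of Theorem 1 of the paper.) -/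
import Mathlib


open scoped Classical

/-- Cooperation labels: `CP` (cooperative) and `NC` (non-cooperative). -/
inductive Coop : Type
  | CP : Coop
  | NC : Coop
deriving DecidableEq

/-- Empirical object-identification error of `o` on the sample `s`. -/
noncomputable def oer {X Y : Type*} {m : ℕ} (o : X → Y) (s : Fin m → X × Y × Coop) : ℝ :=
  ((Finset.univ.filter fun i => o (s i).1 ≠ (s i).2.1).card : ℝ) / m

/-- Empirical cooperation-identification error of `c` on the sample `s`. -/
noncomputable def cer {X Y : Type*} {m : ℕ} (c : X → Coop) (s : Fin m → X × Y × Coop) : ℝ :=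
  ((Finset.univ.filter fun i => c (s i).1 ≠ (s i).2.2).card : ℝ) / m

/-- Empirical non-cooperation frequency of the sample `s`. -/
noncomputable def pNC {X Y : Type*} {m : ℕ} (s : Fin m → X × Y × Coop) : ℝ :=
  ((Finset.univ.filter fun i => (s i).2.2 = Coop.NC).card : ℝ) / m

/-- Cooperation gap of `o` on the sample `s`:
`(1/m)·#{i : z_i = NC ∧ o(x_i) ≠ y_i} − (1/m)·#{i : z_i = CP ∧ o(x_i) ≠ y_i}`. -/
noncomputable def gap {X Y : Type*} {m : ℕ} (o : X → Y) (s : Fin m → X × Y × Coop) : ℝ :=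
  ((Finset.univ.filter fun i => (s i).2.2 = Coop.NC ∧ o (s i).1 ≠ (s i).2.1).card : ℝ) / m
    - ((Finset.univ.filter fun i => (s i).2.2 = Coop.CP ∧ o (s i).1 ≠ (s i).2.1).card : ℝ) / m


/-- Empirical core of Theorem 1: if `C` contains the symmetric-difference class `O∆O`
and `ĉ` minimizes the empirical cooperation-identification error over `C`, then for
every `o, o' ∈ O`: `ĉer_S(ĉ) ≤ p̂_S + ôer_S(o) − Δ_S(o')`. -/
theorem cer_min_le {X Y : Type*} {m : ℕ} (hm : 1 ≤ m)
    (s : Fin m → X × Y × Coop)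
    (O : Set (X → Y)) (C : Set (X → Coop))
    (hOC : ∀ o ∈ O, ∀ o' ∈ O,
      (fun x => if o x ≠ o' x then Coop.NC else Coop.CP) ∈ C)
    (chat : X → Coop) (hchat : chat ∈ C)
    (hmin : ∀ c ∈ C, cer chat s ≤ cer c s) :
    ∀ o ∈ O, ∀ o' ∈ O, cer chat s ≤ pNC s + oer o s - gap o' s := by
  intro o ho o' ho'
  have hc0 := hOC o ho o' ho'
  set c₀ : X → Coop := fun x => if o x ≠ o' x then Coop.NC else Coop.CP with hc0def
  have hle := hmin c₀ hc0
  -- key counting inequality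
  have key : (Finset.univ.filter fun i => c₀ (s i).1 ≠ (s i).2.2).card
      + (Finset.univ.filter fun i => (s i).2.2 = Coop.NC ∧ o' (s i).1 ≠ (s i).2.1).card
    ≤ (Finset.univ.filter fun i => (s i).2.2 = Coop.NC).card
      + (Finset.univ.filter fun i => o (s i).1 ≠ (s i).2.1).card
      + (Finset.univ.filter fun i => (s i).2.2 = Coop.CP ∧ o' (s i).1 ≠ (s i).2.1).card := by
    simp only [Finset.card_filter]
    rw [← Finset.sum_add_distrib, ← Finset.sum_add_distrib, ← Finset.sum_add_distrib]
    apply Finset.sum_le_sum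
    intro i _
    rcases hz : (s i).2.2 with _ | _ <;>
      by_cases ha : o (s i).1 = (s i).2.1 <;>
      by_cases hb : o' (s i).1 = (s i).2.1 <;>
      by_cases hd : o (s i).1 = o' (s i).1 <;>
      simp_all [hc0def]
  have hm0 : (0:ℝ) < m := by exact_mod_cast hm
  have keyR : ((Finset.univ.filter fun i => c₀ (s i).1 ≠ (s i).2.2).card : ℝ)
      + ((Finset.univ.filter fun i => (s i).2.2 = Coop.NC ∧ o' (s i).1 ≠ (s i).2.1).card : ℝ)
    ≤ ((Finset.univ.filter fun i => (s i).2.2 = Coop.NC).card : ℝ)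
      + ((Finset.univ.filter fun i => o (s i).1 ≠ (s i).2.1).card : ℝ)
      + ((Finset.univ.filter fun i => (s i).2.2 = Coop.CP ∧ o' (s i).1 ≠ (s i).2.1).card : ℝ) := by
    exact_mod_cast key
  have h2 : cer c₀ s ≤ pNC s + oer o s - gap o' s := by
    unfold cer pNC oer gap
    rw [div_le_iff₀ hm0] at *
    have e : ∀ a : ℝ, a / (m:ℝ) * m = a := fun a => div_mul_cancel₀ a (ne_of_gt hm0)
    rw [sub_mul, add_mul, sub_mul, e, e, e, e]
    linarith [keyR]
  linarith [hle, h2]
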